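/- Let V be the set of six points (0,0), (1,0), (0,1), (4,5), (5,4), (5,5) in ℝ². Then the set { (x, y) ∈ ℝ² : for all u, v ∈ V, |x·(u₁ − v₁) + y·(u₂ − v₂)| ≤ 1 } is equal to the convex hull of the six points (1/5, 0), (0, 1/5), (−1/2, 1/2), (−1/5, 0), (0, −1/5), (1/2, −1/2). -/
import Mathlib

open Set

private lemma hull3 {S : Set (ℝ × ℝ)} {P1 P2 P3 : ℝ × ℝ}
    (h1 : P1 ∈ convexHull ℝ S) (h2 : P2 ∈ convexHull ℝ S) (h3 : P3 ∈ convexHull ℝ S)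
    {a b c : ℝ} (ha : 0 ≤ a) (hb : 0 ≤ b) (hc : 0 ≤ c) (habc : a + b + c = 1) :
    a • P1 + b • P2 + c • P3 ∈ convexHull ℝ S := by
  have key := (convex_convexHull ℝ S).sum_mem (t := (Finset.univ : Finset (Fin 3)))
    (w := ![a, b, c]) (z := ![P1, P2, P3])
    (fun i _ => by fin_cases i <;> simpa)
    (by simp [Fin.sum_univ_three, habc])
    (fun i _ => by fin_cases i <;> simpa)
  simpa [Fin.sum_univ_three, add_assoc] using key

set_option maxHeartbeats 2000000 in
/-- The unit ball of the Alexander norm (the dual of the Newton polytope with vertex set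
`V = {(0,0), (1,0), (0,1), (4,5), (5,4), (5,5)}`) is the hexagon with vertices
`(1/5, 0), (0, 1/5), (−1/2, 1/2), (−1/5, 0), (0, −1/5), (1/2, −1/2)`. -/
theorem alexander_norm_unit_ball :
    let V : Set (ℝ × ℝ) := {(0, 0), (1, 0), (0, 1), (4, 5), (5, 4), (5, 5)}
    {p : ℝ × ℝ | ∀ u ∈ V, ∀ v ∈ V, |p.1 * (u.1 - v.1) + p.2 * (u.2 - v.2)| ≤ 1} =
      convexHull ℝ
        ({(1/5, 0), (0, 1/5), (-1/2, 1/2), (-1/5, 0), (0, -1/5), (1/2, -1/2)} :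
          Set (ℝ × ℝ)) := by
  intro V
  set S : Set (ℝ × ℝ) := {(1/5, 0), (0, 1/5), (-1/2, 1/2), (-1/5, 0), (0, -1/5), (1/2, -1/2)}
    with hS
  have hA : ((1/5, 0) : ℝ × ℝ) ∈ convexHull ℝ S := subset_convexHull ℝ S (by simp [hS])
  have hB : ((0, 1/5) : ℝ × ℝ) ∈ convexHull ℝ S := subset_convexHull ℝ S (by simp [hS])
  have hC : ((-1/2, 1/2) : ℝ × ℝ) ∈ convexHull ℝ S := subset_convexHull ℝ S (by simp [hS])
  have hD : ((-1/5, 0) : ℝ × ℝ) ∈ convexHull ℝ S := subset_convexHull ℝ S (by simp [hS])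
  have hE : ((0, -1/5) : ℝ × ℝ) ∈ convexHull ℝ S := subset_convexHull ℝ S (by simp [hS])
  have hF : ((1/2, -1/2) : ℝ × ℝ) ∈ convexHull ℝ S := subset_convexHull ℝ S (by simp [hS])
  have hO : ((0, 0) : ℝ × ℝ) ∈ convexHull ℝ S := by
    have := hull3 hA hD hD (a := 1/2) (b := 1/2) (c := 0)
      (by norm_num) (by norm_num) le_rfl (by norm_num)
    convert this using 1
    apply Prod.ext <;> simp <;> norm_num
  ext p
  constructor
  · intro hp
    have h1 := hp (5, 5) (by simp [V]) (0, 0) (by simp [V])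
    have h2 := hp (4, 5) (by simp [V]) (1, 0) (by simp [V])
    have h3 := hp (5, 4) (by simp [V]) (0, 1) (by simp [V])
    norm_num [abs_le] at h1 h2 h3
    obtain ⟨h1l, h1u⟩ := h1
    obtain ⟨h2l, h2u⟩ := h2
    obtain ⟨h3l, h3u⟩ := h3
    set x := p.1 with hx'
    set y := p.2 with hy'
    rcases le_total 0 x with hx | hx <;> rcases le_total 0 y with hy | hy
    · -- x ≥ 0, y ≥ 0 : combo of A, B, O
      have hrep : p = (5*x) • ((1/5, 0) : ℝ × ℝ) + (5*y) • ((0, 1/5) : ℝ × ℝ)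
          + (1 - 5*x - 5*y) • ((0, 0) : ℝ × ℝ) := by
        apply Prod.ext <;> simp [← hx', ← hy'] <;> ring
      rw [hrep]
      exact hull3 hA hB hO (by linarith) (by linarith) (by linarith) (by ring)
    · rcases le_total 0 (x + y) with hxy | hxy
      · -- x ≥ 0, y ≤ 0, x+y ≥ 0 : combo of F, A, O
        have hrep : p = (-2*y) • ((1/2, -1/2) : ℝ × ℝ) + (5*x + 5*y) • ((1/5, 0) : ℝ × ℝ)
            + (1 - (-2*y) - (5*x + 5*y)) • ((0, 0) : ℝ × ℝ) := by
          apply Prod.ext <;> simp [← hx', ← hy'] <;> ring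
        rw [hrep]
        exact hull3 hF hA hO (by linarith) (by linarith) (by linarith) (by ring)
      · -- x ≥ 0, y ≤ 0, x+y ≤ 0 : combo of E, F, O
        have hrep : p = (-5*x - 5*y) • ((0, -1/5) : ℝ × ℝ) + (2*x) • ((1/2, -1/2) : ℝ × ℝ)
            + (1 - (-5*x - 5*y) - 2*x) • ((0, 0) : ℝ × ℝ) := by
          apply Prod.ext <;> simp [← hx', ← hy'] <;> ring
        rw [hrep]
        exact hull3 hE hF hO (by linarith) (by linarith) (by linarith) (by ring)
    · rcases le_total 0 (x + y) with hxy | hxy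
      · -- x ≤ 0, y ≥ 0, x+y ≥ 0 : combo of B, C, O
        have hrep : p = (5*x + 5*y) • ((0, 1/5) : ℝ × ℝ) + (-2*x) • ((-1/2, 1/2) : ℝ × ℝ)
            + (1 - (5*x + 5*y) - (-2*x)) • ((0, 0) : ℝ × ℝ) := by
          apply Prod.ext <;> simp [← hx', ← hy'] <;> ring
        rw [hrep]
        exact hull3 hB hC hO (by linarith) (by linarith) (by linarith) (by ring)
      · -- x ≤ 0, y ≥ 0, x+y ≤ 0 : combo of C, D, O
        have hrep : p = (2*y) • ((-1/2, 1/2) : ℝ × ℝ) + (-5*x - 5*y) • ((-1/5, 0) : ℝ × ℝ)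
            + (1 - 2*y - (-5*x - 5*y)) • ((0, 0) : ℝ × ℝ) := by
          apply Prod.ext <;> simp [← hx', ← hy'] <;> ring
        rw [hrep]
        exact hull3 hC hD hO (by linarith) (by linarith) (by linarith) (by ring)
    · -- x ≤ 0, y ≤ 0 : combo of D, E, O
      have hrep : p = (-5*x) • ((-1/5, 0) : ℝ × ℝ) + (-5*y) • ((0, -1/5) : ℝ × ℝ)
          + (1 - (-5*x) - (-5*y)) • ((0, 0) : ℝ × ℝ) := by
        apply Prod.ext <;> simp [← hx', ← hy'] <;> ring
      rw [hrep]
      exact hull3 hD hE hO (by linarith) (by linarith) (by linarith) (by ring)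
  · intro hp
    have hconv : Convex ℝ {p : ℝ × ℝ | ∀ u ∈ V, ∀ v ∈ V,
        |p.1 * (u.1 - v.1) + p.2 * (u.2 - v.2)| ≤ 1} := by
      intro q hq r hr a b ha hb hab
      intro u hu v hv
      have hq' := hq u hu v hv
      have hr' := hr u hu v hv
      have heq : (a • q + b • r).1 * (u.1 - v.1) + (a • q + b • r).2 * (u.2 - v.2)
          = a * (q.1 * (u.1 - v.1) + q.2 * (u.2 - v.2))
            + b * (r.1 * (u.1 - v.1) + r.2 * (u.2 - v.2)) := by
        simp [Prod.fst_add, Prod.snd_add, smul_eq_mul]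
        ring
      rw [Set.mem_setOf_eq] at *
      calc |(a • q + b • r).1 * (u.1 - v.1) + (a • q + b • r).2 * (u.2 - v.2)|
          = |a * (q.1 * (u.1 - v.1) + q.2 * (u.2 - v.2))
            + b * (r.1 * (u.1 - v.1) + r.2 * (u.2 - v.2))| := by rw [heq]
        _ ≤ |a * (q.1 * (u.1 - v.1) + q.2 * (u.2 - v.2))|
            + |b * (r.1 * (u.1 - v.1) + r.2 * (u.2 - v.2))| := abs_add_le _ _
        _ = a * |q.1 * (u.1 - v.1) + q.2 * (u.2 - v.2)|
            + b * |r.1 * (u.1 - v.1) + r.2 * (u.2 - v.2)| := by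
            rw [abs_mul, abs_mul, abs_of_nonneg ha, abs_of_nonneg hb]
        _ ≤ a * 1 + b * 1 := add_le_add
            (mul_le_mul_of_nonneg_left hq' ha) (mul_le_mul_of_nonneg_left hr' hb)
        _ = 1 := by linarith
    have hsub : S ⊆ {p : ℝ × ℝ | ∀ u ∈ V, ∀ v ∈ V,
        |p.1 * (u.1 - v.1) + p.2 * (u.2 - v.2)| ≤ 1} := by
      intro q hq u hu v hv
      simp only [hS, V, mem_insert_iff, mem_singleton_iff] at hq hu hv
      rcases hq with rfl | rfl | rfl | rfl | rfl | rfl <;>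
        rcases hu with rfl | rfl | rfl | rfl | rfl | rfl <;>
          rcases hv with rfl | rfl | rfl | rfl | rfl | rfl <;>
            norm_num [abs_le]
    exact convexHull_min hsub hconv hp
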